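/- Let β > 0, θ₀ ∈ ℝ, θ₋₁ = θ₀ + β, and Z(θ) = ∑_{z∈ℤ} e^{θz − βz²/2}. Then with r(z) = e^{−β/2+βz} and for any integers ω₋₁, ω₀: (e^β − 1)·r(ω₋₁)·e^{−β ω₋₁}·Z(θ₋₁)/Z(θ₀) + (1 − e^{−β})·r(−ω₀)·e^{β(ω₀+1)}·Z(θ₀)/Z(θ₋₁) = (e^β − 1)e^{−β/2}·e^{β/2+θ₀} + (1 − e^{−β})e^{β/2}·e^{−β/2−θ₀}, a constant independent of ω₋₁ and ω₀. -/

import Mathlib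

lemma aux_nat_summable (β s : ℝ) (hβ : 0 < β) :
    Summable (fun n : ℕ => Real.exp (s * n - β * n ^ 2 / 2)) := by
  apply summable_of_ratio_norm_eventually_le (r := 1/2) (by norm_num)
  filter_upwards [Filter.eventually_ge_atTop ⌈(s - Real.log (1/2)) / β⌉₊] with n hn
  have hn' : (s - Real.log (1/2)) / β ≤ (n : ℝ) :=
    le_trans (Nat.le_ceil _) (by exact_mod_cast hn)
  have hle : s - β * (2 * n + 1) / 2 ≤ Real.log (1/2) := by
    have : s - Real.log (1/2) ≤ β * n := by
      rw [div_le_iff₀ hβ] at hn'; linarith [hn']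
    nlinarith [mul_pos hβ (by positivity : (0:ℝ) < (n:ℝ) + 1)]
  have key : Real.exp (s - β * (2 * n + 1) / 2) ≤ 1/2 := by
    calc Real.exp (s - β * (2 * n + 1) / 2) ≤ Real.exp (Real.log (1/2)) :=
          Real.exp_le_exp.mpr hle
      _ = 1/2 := Real.exp_log (by norm_num)
  have heq : s * (n + 1 : ℕ) - β * ((n + 1 : ℕ) : ℝ) ^ 2 / 2
      = (s * n - β * n ^ 2 / 2) + (s - β * (2 * n + 1) / 2) := by
    push_cast; ring
  rw [Real.norm_eq_abs, Real.norm_eq_abs, abs_of_pos (Real.exp_pos _),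
    abs_of_pos (Real.exp_pos _), heq, Real.exp_add]
  have := Real.exp_pos (s * n - β * n ^ 2 / 2)
  nlinarith [key, this]

lemma aux_summable (β t : ℝ) (hβ : 0 < β) :
    Summable (fun z : ℤ => Real.exp (t * z - β * z ^ 2 / 2)) := by
  apply Summable.of_nat_of_neg_add_one
  · exact_mod_cast aux_nat_summable β t hβ
  · have hi : Function.Injective (fun n : ℕ => n + 1) := fun a b h => by simpa using h
    have h := (aux_nat_summable β (-t) hβ).comp_injective hi
    convert h using 2 with n
    rfl
    simp only [Function.comp]
    push_cast; ring_nf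

lemma aux_Zpos (β t : ℝ) (hβ : 0 < β) :
    0 < ∑' z : ℤ, Real.exp (t * z - β * z ^ 2 / 2) :=
  Summable.tsum_pos (aux_summable β t hβ) (fun z => (Real.exp_pos _).le) 0 (Real.exp_pos _)

lemma aux_shift (β t : ℝ) :
    (∑' z : ℤ, Real.exp ((t + β) * z - β * z ^ 2 / 2))
      = Real.exp (β / 2 + t) * ∑' z : ℤ, Real.exp (t * z - β * z ^ 2 / 2) := by
  rw [← tsum_mul_left]
  have := (Equiv.subRight (1 : ℤ)).tsum_eq
    (fun z : ℤ => Real.exp (β / 2 + t) * Real.exp (t * z - β * z ^ 2 / 2))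
  rw [← this]
  congr 1; ext z
  rw [← Real.exp_add]
  congr 1
  simp only [Equiv.subRight_apply]
  push_cast; ring

theorem stmt_16 (β : ℝ) (hβ : 0 < β) (θ₀ : ℝ)
    (Z : ℝ → ℝ) (hZ : ∀ t : ℝ, Z t = ∑' z : ℤ, Real.exp (t * z - β * z ^ 2 / 2))
    (r : ℤ → ℝ) (hr : ∀ z : ℤ, r z = Real.exp (-β/2 + β * z)) :
    ∀ wm1 w0 : ℤ,
      (Real.exp β - 1) * r wm1 * Real.exp (-β * wm1) * (Z (θ₀ + β) / Z θ₀) +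
      (1 - Real.exp (-β)) * r (-w0) * Real.exp (β * (w0 + 1)) * (Z θ₀ / Z (θ₀ + β)) =
      (Real.exp β - 1) * Real.exp (-β/2) * Real.exp (β/2 + θ₀) +
      (1 - Real.exp (-β)) * Real.exp (β/2) * Real.exp (-β/2 - θ₀) := by
  intro wm1 w0
  have hZ0 : 0 < Z θ₀ := by rw [hZ]; exact aux_Zpos β θ₀ hβ
  have hratio : Z (θ₀ + β) / Z θ₀ = Real.exp (β / 2 + θ₀) := by
    rw [hZ, hZ, aux_shift β θ₀, mul_div_assoc, div_self (aux_Zpos β θ₀ hβ).ne', mul_one]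
  have hratio' : Z θ₀ / Z (θ₀ + β) = Real.exp (-β / 2 - θ₀) := by
    rw [← inv_div, hratio, ← Real.exp_neg]
    ring_nf
  have h1 : r wm1 * Real.exp (-β * wm1) = Real.exp (-β/2) := by
    rw [hr, ← Real.exp_add]; ring_nf
  have h2 : r (-w0) * Real.exp (β * (w0 + 1)) = Real.exp (β/2) := by
    rw [hr, ← Real.exp_add]; push_cast; ring_nf
  rw [hratio, hratio', mul_assoc (Real.exp β - 1), h1,
    mul_assoc (1 - Real.exp (-β)), h2]
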